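/- The family of monomials {vⁱ·uʲ·wᵏ : i, j, k ∈ ℕ} is a basis of the algebra B_q(f) as a k-vector space. -/

import Mathlib

open FreeAlgebra

/-- The defining relations of the algebra `B_q(f)` for `f = ∑_{j=0}^{d} c_j tʲ`:
generators `0 ↦ u`, `1 ↦ v`, `2 ↦ w` subject to `uv = qvu`, `wu = quw + f(v)`,
`wv = q⁻¹vw + f(u)`. -/
inductive BqfRel (k : Type*) [Field k] (q : k) (d : ℕ) (c : ℕ → k) :
    FreeAlgebra k (Fin 3) → FreeAlgebra k (Fin 3) → Prop
  | uv : BqfRel k q d c (ι k (0 : Fin 3) * ι k (1 : Fin 3))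
      (q • (ι k (1 : Fin 3) * ι k (0 : Fin 3)))
  | wu : BqfRel k q d c (ι k (2 : Fin 3) * ι k (0 : Fin 3))
      (q • (ι k (0 : Fin 3) * ι k (2 : Fin 3)) +
        ∑ j ∈ Finset.range (d + 1), c j • ι k (1 : Fin 3) ^ j)
  | wv : BqfRel k q d c (ι k (2 : Fin 3) * ι k (1 : Fin 3))
      (q⁻¹ • (ι k (1 : Fin 3) * ι k (2 : Fin 3)) +
        ∑ j ∈ Finset.range (d + 1), c j • ι k (0 : Fin 3) ^ j)

open Finsupp
section Model
variable {k : Type*} [Field k]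

abbrev MSp (k : Type*) [Field k] : Type _ := (ℕ × ℕ × ℕ) →₀ k

noncomputable def Vop : MSp k →ₗ[k] MSp k :=
  Finsupp.lsum k fun p => Finsupp.lsingle (p.1 + 1, p.2.1, p.2.2)

noncomputable def Uop (q : k) : MSp k →ₗ[k] MSp k :=
  Finsupp.lsum k fun p => q ^ p.1 • Finsupp.lsingle (p.1, p.2.1 + 1, p.2.2)

def S1 (q : k) (a j : ℕ) : k := ∑ t ∈ Finset.range j, q ^ (t * (1 + a))
def S2 (q : k) (a i : ℕ) : k := ∑ s ∈ Finset.range i, q⁻¹ ^ s * q ^ (a * (i - 1 - s))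

noncomputable def Wop (q : k) (d : ℕ) (c : ℕ → k) : MSp k →ₗ[k] MSp k :=
  Finsupp.lsum k fun p =>
    (q ^ p.2.1 * q⁻¹ ^ p.1) • Finsupp.lsingle (p.1, p.2.1, p.2.2 + 1)
    + ∑ a ∈ Finset.range (d+1),
        (c a * q⁻¹ ^ p.1 * S1 q a p.2.1) • Finsupp.lsingle (p.1 + a, p.2.1 - 1, p.2.2)
    + ∑ a ∈ Finset.range (d+1),
        (c a * S2 q a p.1) • Finsupp.lsingle (p.1 - 1, p.2.1 + a, p.2.2)

@[simp] lemma Vop_single (i j l : ℕ) (x : k) :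
    Vop (Finsupp.single (i,j,l) x) = Finsupp.single (i+1,j,l) x := by
  simp [Vop]

@[simp] lemma Uop_single (q : k) (i j l : ℕ) (x : k) :
    Uop q (Finsupp.single (i,j,l) x) = q ^ i • Finsupp.single (i,j+1,l) x := by
  simp [Uop]

lemma Wop_single (q : k) (d : ℕ) (c : ℕ → k) (i j l : ℕ) (x : k) :
    Wop q d c (Finsupp.single (i,j,l) x) =
      (q ^ j * q⁻¹ ^ i) • Finsupp.single (i,j,l+1) x
      + ∑ a ∈ Finset.range (d+1),
          (c a * q⁻¹ ^ i * S1 q a j) • Finsupp.single (i + a, j - 1, l) x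
      + ∑ a ∈ Finset.range (d+1),
          (c a * S2 q a i) • Finsupp.single (i - 1, j + a, l) x := by
  simp [Wop]

@[simp] lemma S1_zero (q : k) (a : ℕ) : S1 q a 0 = 0 := by simp [S1]
@[simp] lemma S2_zero (q : k) (a : ℕ) : S2 q a 0 = 0 := by simp [S2]

lemma S1_succ (q : k) (a j : ℕ) : S1 q a (j+1) = q ^ (1+a) * S1 q a j + 1 := by
  simp only [S1, Finset.sum_range_succ', Finset.mul_sum, Nat.zero_mul, pow_zero]
  congr 1
  apply Finset.sum_congr rfl
  intro t _
  rw [add_mul, one_mul, pow_add, pow_mul]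
  ring

lemma S2_succ (q : k) (a i : ℕ) : S2 q a (i+1) = q⁻¹ * S2 q a i + q ^ (a * i) := by
  simp only [S2, Finset.sum_range_succ', Finset.mul_sum, Nat.add_sub_cancel, pow_zero,
    one_mul, Nat.sub_zero]
  congr 1
  apply Finset.sum_congr rfl
  intro s _
  have : i - (s + 1) = i - 1 - s := by omega
  rw [this, pow_succ]
  ring

end Model

section Pows
variable {k : Type*} [Field k]

lemma Vop_pow_single (n i j l : ℕ) (x : k) :
    ((Vop (k := k)) ^ n) (Finsupp.single (i,j,l) x) = Finsupp.single (i+n,j,l) x := by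
  induction n with
  | zero => simp
  | succ n ih => rw [pow_succ', Module.End.mul_apply, ih, Vop_single, add_assoc]

lemma Uop_pow_single (q : k) (n i j l : ℕ) (x : k) :
    ((Uop q) ^ n) (Finsupp.single (i,j,l) x) = q ^ (i*n) • Finsupp.single (i,j+n,l) x := by
  induction n with
  | zero => simp
  | succ n ih =>
      rw [pow_succ', Module.End.mul_apply, ih, map_smul, Uop_single, smul_smul,
        ← pow_add, add_assoc]
      ring_nf

end Pows

section Rels
variable {k : Type*} [Field k] (q : k) (d : ℕ) (c : ℕ → k)

lemma R2_single (hq : q ≠ 0) (i j l : ℕ) (x : k) :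
    Wop q d c (Uop q (Finsupp.single (i,j,l) x)) =
      q • Uop q (Wop q d c (Finsupp.single (i,j,l) x))
      + ∑ a ∈ Finset.range (d+1), c a • ((Vop (k := k)) ^ a) (Finsupp.single (i,j,l) x) := by
  have key : (q⁻¹:k) ^ i * q ^ i = 1 := by rw [← mul_pow, inv_mul_cancel₀ hq, one_pow]
  rw [Uop_single, map_smul, Wop_single, Wop_single, map_add, map_add, map_smul, Uop_single,
      map_sum, map_sum]
  simp only [Uop_single, Vop_pow_single, smul_smul, Finset.smul_sum, smul_add, map_smul,
    Nat.add_sub_cancel]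
  have hA : (q ^ i * (q ^ (j + 1) * q⁻¹ ^ i)) = (q * (q ^ j * q⁻¹ ^ i * q ^ i)) := by
    rw [pow_succ]; ring
  have hB : (∑ a ∈ Finset.range (d+1),
        (q ^ i * (c a * q⁻¹ ^ i * S1 q a (j + 1))) • Finsupp.single ((i + a, j, l) : ℕ×ℕ×ℕ) x)
      = (∑ a ∈ Finset.range (d+1),
          (q * (c a * q⁻¹ ^ i * S1 q a j * q ^ (i + a))) • Finsupp.single ((i + a, j - 1 + 1, l) : ℕ×ℕ×ℕ) x)
        + ∑ a ∈ Finset.range (d+1), c a • Finsupp.single ((i + a, j, l) : ℕ×ℕ×ℕ) x := by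
    cases j with
    | zero =>
        simp only [S1_zero, mul_zero, zero_mul, zero_smul, Finset.sum_const_zero, zero_add]
        refine Finset.sum_congr rfl fun a _ => ?_
        congr 1
        rw [S1_succ, S1_zero]
        field_simp
        linear_combination c a * key
    | succ jj =>
        rw [← Finset.sum_add_distrib]
        refine Finset.sum_congr rfl fun a _ => ?_
        simp only [Nat.add_sub_cancel]
        rw [← add_smul]
        congr 1
        rw [S1_succ]
        field_simp
        linear_combination c a * key
  have hC : (∑ a ∈ Finset.range (d+1),
        (q ^ i * (c a * S2 q a i)) • Finsupp.single ((i - 1, j + 1 + a, l) : ℕ×ℕ×ℕ) x)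
      = ∑ a ∈ Finset.range (d+1),
          (q * (c a * S2 q a i * q ^ (i - 1))) • Finsupp.single ((i - 1, j + a + 1, l) : ℕ×ℕ×ℕ) x := by
    cases i with
    | zero => simp
    | succ ii =>
        refine Finset.sum_congr rfl fun a _ => ?_
        rw [Nat.add_right_comm j 1 a, Nat.add_sub_cancel]
        congr 1
        rw [pow_succ]
        ring
  rw [hA, hB, hC]
  abel

lemma R3_single (hq : q ≠ 0) (i j l : ℕ) (x : k) :
    Wop q d c (Vop (Finsupp.single (i,j,l) x)) =
      q⁻¹ • Vop (Wop q d c (Finsupp.single (i,j,l) x))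
      + ∑ a ∈ Finset.range (d+1), c a • ((Uop q) ^ a) (Finsupp.single (i,j,l) x) := by
  rw [Vop_single, Wop_single, Wop_single, map_add, map_add, map_smul, Vop_single,
      map_sum, map_sum]
  simp only [Vop_single, Uop_pow_single, smul_smul, Finset.smul_sum, smul_add, map_smul,
    Nat.add_sub_cancel]
  have hA : (q ^ j * q⁻¹ ^ (i+1)) = (q⁻¹ * (q ^ j * q⁻¹ ^ i)) := by rw [pow_succ]; ring
  have hB : (∑ a ∈ Finset.range (d+1),
        (c a * q⁻¹ ^ (i+1) * S1 q a j) • Finsupp.single ((i + 1 + a, j - 1, l) : ℕ×ℕ×ℕ) x)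
      = ∑ a ∈ Finset.range (d+1),
          (q⁻¹ * (c a * q⁻¹ ^ i * S1 q a j)) • Finsupp.single ((i + a + 1, j - 1, l) : ℕ×ℕ×ℕ) x := by
    refine Finset.sum_congr rfl fun a _ => ?_
    rw [Nat.add_right_comm i 1 a]
    congr 1
    rw [pow_succ]
    ring
  have hC : (∑ a ∈ Finset.range (d+1),
        (c a * S2 q a (i+1)) • Finsupp.single ((i, j + a, l) : ℕ×ℕ×ℕ) x)
      = (∑ a ∈ Finset.range (d+1),
          (q⁻¹ * (c a * S2 q a i)) • Finsupp.single ((i - 1 + 1, j + a, l) : ℕ×ℕ×ℕ) x)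
        + ∑ a ∈ Finset.range (d+1), (c a * q ^ (i * a)) • Finsupp.single ((i, j + a, l) : ℕ×ℕ×ℕ) x := by
    cases i with
    | zero =>
        simp only [S2_zero, mul_zero, zero_mul, zero_smul, smul_zero, Finset.sum_const_zero,
          zero_add]
        refine Finset.sum_congr rfl fun a _ => ?_
        congr 1
        rw [S2_succ, S2_zero]
        simp
    | succ ii =>
        rw [← Finset.sum_add_distrib]
        refine Finset.sum_congr rfl fun a _ => ?_
        simp only [Nat.add_sub_cancel]
        rw [← add_smul]
        congr 1
        rw [S2_succ]
        ring
  rw [hA, hB, hC]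
  abel

lemma R1_end : Uop q * Vop = q • ((Vop : Module.End k (MSp k)) * Uop q) := by
  refine Finsupp.lhom_ext fun p x => ?_
  obtain ⟨i, j, l⟩ := p
  simp only [Module.End.mul_apply, LinearMap.smul_apply, Vop_single, Uop_single, map_smul,
    smul_smul, pow_succ]
  ring_nf

lemma R2_end (hq : q ≠ 0) : Wop q d c * Uop q =
    q • (Uop q * Wop q d c) + ∑ a ∈ Finset.range (d+1), c a • ((Vop : Module.End k (MSp k)) ^ a) := by
  refine Finsupp.lhom_ext fun p x => ?_
  obtain ⟨i, j, l⟩ := p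
  simp only [Module.End.mul_apply, LinearMap.add_apply, LinearMap.smul_apply,
    LinearMap.coe_sum, Finset.sum_apply]
  exact R2_single q d c hq i j l x

lemma R3_end (hq : q ≠ 0) : Wop q d c * Vop =
    q⁻¹ • ((Vop : Module.End k (MSp k)) * Wop q d c) + ∑ a ∈ Finset.range (d+1), c a • (Uop q ^ a) := by
  refine Finsupp.lhom_ext fun p x => ?_
  obtain ⟨i, j, l⟩ := p
  simp only [Module.End.mul_apply, LinearMap.add_apply, LinearMap.smul_apply,
    LinearMap.coe_sum, Finset.sum_apply]
  exact R3_single q d c hq i j l x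

end Rels

section Phi
open FreeAlgebra
variable {k : Type*} [Field k] (q : k) (d : ℕ) (c : ℕ → k)

noncomputable def phi (hq : q ≠ 0) : RingQuot (BqfRel k q d c) →ₐ[k] Module.End k (MSp k) :=
  RingQuot.liftAlgHom k
    ⟨FreeAlgebra.lift k ![Uop q, Vop, Wop q d c], by
      intro x y h
      induction h with
      | uv => simp only [map_mul, map_smul, lift_ι_apply, Matrix.cons_val_zero,
          Matrix.cons_val_one, Matrix.head_cons]; exact R1_end q
      | wu =>
          simp only [map_mul, map_smul, map_add, map_sum, map_pow, lift_ι_apply,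
            Matrix.cons_val_zero, Matrix.cons_val_one, Matrix.head_cons]
          have h2 : (![Uop q, Vop, Wop q d c] : Fin 3 → Module.End k (MSp k)) 2 = Wop q d c := rfl
          rw [h2]
          exact R2_end q d c hq
      | wv =>
          simp only [map_mul, map_smul, map_add, map_sum, map_pow, lift_ι_apply,
            Matrix.cons_val_zero, Matrix.cons_val_one, Matrix.head_cons]
          have h2 : (![Uop q, Vop, Wop q d c] : Fin 3 → Module.End k (MSp k)) 2 = Wop q d c := rfl
          rw [h2]
          exact R3_end q d c hq⟩

lemma phi_u (hq : q ≠ 0) :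
    phi q d c hq (RingQuot.mkAlgHom k (BqfRel k q d c) (ι k (0 : Fin 3))) = Uop q := by
  simp [phi, RingQuot.liftAlgHom_mkAlgHom_apply]

lemma phi_v (hq : q ≠ 0) :
    phi q d c hq (RingQuot.mkAlgHom k (BqfRel k q d c) (ι k (1 : Fin 3))) = Vop := by
  simp [phi, RingQuot.liftAlgHom_mkAlgHom_apply]

lemma phi_w (hq : q ≠ 0) :
    phi q d c hq (RingQuot.mkAlgHom k (BqfRel k q d c) (ι k (2 : Fin 3))) = Wop q d c := by
  simp [phi, RingQuot.liftAlgHom_mkAlgHom_apply]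

end Phi

section Eval
variable {k : Type*} [Field k] (q : k) (d : ℕ) (c : ℕ → k)

lemma Wop_e00 (m : ℕ) (x : k) :
    Wop q d c (Finsupp.single (0,0,m) x) = Finsupp.single (0,0,m+1) x := by
  rw [Wop_single]; simp

lemma Wop_pow_e00 (n m : ℕ) (x : k) :
    ((Wop q d c) ^ n) (Finsupp.single (0,0,m) x) = Finsupp.single (0,0,m+n) x := by
  induction n with
  | zero => simp
  | succ n ih => rw [pow_succ', Module.End.mul_apply, ih, Wop_e00, add_assoc]

lemma eval_mon (hq : q ≠ 0) (p : ℕ × ℕ × ℕ) :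
    phi q d c hq ((RingQuot.mkAlgHom k (BqfRel k q d c) (ι k (1 : Fin 3))) ^ p.1 *
        (RingQuot.mkAlgHom k (BqfRel k q d c) (ι k (0 : Fin 3))) ^ p.2.1 *
        (RingQuot.mkAlgHom k (BqfRel k q d c) (ι k (2 : Fin 3))) ^ p.2.2)
      (Finsupp.single (0,0,0) (1:k)) = Finsupp.single p 1 := by
  obtain ⟨i, j, l⟩ := p
  rw [map_mul, map_mul, map_pow, map_pow, map_pow, phi_u, phi_v, phi_w,
    Module.End.mul_apply, Module.End.mul_apply, Wop_pow_e00, Uop_pow_single,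
    map_smul, Vop_pow_single]
  simp

lemma li_mon (hq : q ≠ 0) :
    LinearIndependent k (fun p : ℕ × ℕ × ℕ =>
      (RingQuot.mkAlgHom k (BqfRel k q d c) (ι k (1 : Fin 3))) ^ p.1 *
      (RingQuot.mkAlgHom k (BqfRel k q d c) (ι k (0 : Fin 3))) ^ p.2.1 *
      (RingQuot.mkAlgHom k (BqfRel k q d c) (ι k (2 : Fin 3))) ^ p.2.2) := by
  apply LinearIndependent.of_comp
    ((LinearMap.applyₗ (Finsupp.single ((0,0,0) : ℕ×ℕ×ℕ) (1:k))).comp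
      (phi q d c hq).toLinearMap)
  have he : (((LinearMap.applyₗ (Finsupp.single ((0,0,0) : ℕ×ℕ×ℕ) (1:k))).comp
      (phi q d c hq).toLinearMap) ∘ (fun p : ℕ × ℕ × ℕ =>
      (RingQuot.mkAlgHom k (BqfRel k q d c) (ι k (1 : Fin 3))) ^ p.1 *
      (RingQuot.mkAlgHom k (BqfRel k q d c) (ι k (0 : Fin 3))) ^ p.2.1 *
      (RingQuot.mkAlgHom k (BqfRel k q d c) (ι k (2 : Fin 3))) ^ p.2.2))
      = fun p => Finsupp.single p 1 := by
    funext p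
    exact eval_mon q d c hq p
  rw [he]
  exact Finsupp.basisSingleOne.linearIndependent

end Eval

section Span
variable {k : Type*} [Field k] (q : k) (d : ℕ) (c : ℕ → k)

local notation "B" => RingQuot (BqfRel k q d c)
noncomputable def uB : RingQuot (BqfRel k q d c) := RingQuot.mkAlgHom k (BqfRel k q d c) (ι k (0 : Fin 3))
noncomputable def vB : RingQuot (BqfRel k q d c) := RingQuot.mkAlgHom k (BqfRel k q d c) (ι k (1 : Fin 3))
noncomputable def wB : RingQuot (BqfRel k q d c) := RingQuot.mkAlgHom k (BqfRel k q d c) (ι k (2 : Fin 3))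

noncomputable def monB : ℕ × ℕ × ℕ → RingQuot (BqfRel k q d c) :=
  fun p => vB q d c ^ p.1 * uB q d c ^ p.2.1 * wB q d c ^ p.2.2

lemma rel_uv : uB q d c * vB q d c = q • (vB q d c * uB q d c) := by
  have := RingQuot.mkAlgHom_rel k (BqfRel.uv (k := k) (q := q) (d := d) (c := c))
  simpa [uB, vB, map_mul, map_smul] using this

lemma rel_wu : wB q d c * uB q d c = q • (uB q d c * wB q d c)
    + ∑ a ∈ Finset.range (d+1), c a • vB q d c ^ a := by
  have := RingQuot.mkAlgHom_rel k (BqfRel.wu (k := k) (q := q) (d := d) (c := c))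
  simpa [uB, vB, wB, map_mul, map_smul, map_add, map_sum, map_pow] using this

lemma rel_wv : wB q d c * vB q d c = q⁻¹ • (vB q d c * wB q d c)
    + ∑ a ∈ Finset.range (d+1), c a • uB q d c ^ a := by
  have := RingQuot.mkAlgHom_rel k (BqfRel.wv (k := k) (q := q) (d := d) (c := c))
  simpa [uB, vB, wB, map_mul, map_smul, map_add, map_sum, map_pow] using this

lemma u_vpow (i : ℕ) : uB q d c * vB q d c ^ i = q ^ i • (vB q d c ^ i * uB q d c) := by
  induction i with
  | zero => simp
  | succ i ih =>
      rw [pow_succ', ← mul_assoc, rel_uv, smul_mul_assoc, mul_assoc, ih, pow_succ]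
      rw [mul_smul_comm, smul_smul, mul_assoc, mul_comm q]

lemma upow_vpow (a i : ℕ) :
    uB q d c ^ a * vB q d c ^ i = q ^ (a * i) • (vB q d c ^ i * uB q d c ^ a) := by
  induction a with
  | zero => simp
  | succ a ih =>
      rw [pow_succ', mul_assoc, ih, mul_smul_comm, ← mul_assoc, u_vpow, smul_mul_assoc,
        smul_smul, mul_assoc, ← pow_succ', ← pow_add]
      congr 1
      ring

noncomputable def SB : Submodule k (RingQuot (BqfRel k q d c)) :=
  Submodule.span k (Set.range (monB q d c))

lemma mem_SB (p : ℕ × ℕ × ℕ) : monB q d c p ∈ SB q d c :=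
  Submodule.subset_span (Set.mem_range_self p)

lemma v_mul_mon (p : ℕ × ℕ × ℕ) :
    vB q d c * monB q d c p = monB q d c (p.1 + 1, p.2.1, p.2.2) := by
  obtain ⟨i, j, l⟩ := p
  simp only [monB]
  rw [← mul_assoc, ← mul_assoc, ← pow_succ']

lemma u_mul_mon (p : ℕ × ℕ × ℕ) :
    uB q d c * monB q d c p = q ^ p.1 • monB q d c (p.1, p.2.1 + 1, p.2.2) := by
  obtain ⟨i, j, l⟩ := p
  simp only [monB, pow_succ', mul_assoc]
  rw [← mul_assoc (uB q d c), u_vpow, smul_mul_assoc, mul_assoc]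

lemma stable_mul (x : RingQuot (BqfRel k q d c)) (h : ∀ p, x * monB q d c p ∈ SB q d c) :
    ∀ s ∈ SB q d c, x * s ∈ SB q d c := by
  intro s hs
  induction hs using Submodule.span_induction with
  | mem y hy => obtain ⟨p, rfl⟩ := hy; exact h p
  | zero => simp
  | add a b _ _ ha hb => rw [mul_add]; exact add_mem ha hb
  | smul r a _ ha => rw [mul_smul_comm]; exact Submodule.smul_mem _ r ha

lemma v_stable : ∀ s ∈ SB q d c, vB q d c * s ∈ SB q d c := by
  apply stable_mul
  intro p
  rw [v_mul_mon]
  exact mem_SB q d c _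

lemma u_stable : ∀ s ∈ SB q d c, uB q d c * s ∈ SB q d c := by
  apply stable_mul
  intro p
  rw [u_mul_mon]
  exact Submodule.smul_mem _ _ (mem_SB q d c _)

lemma w_mul_mon : ∀ i j l : ℕ, wB q d c * monB q d c (i, j, l) ∈ SB q d c := by
  intro i
  induction i with
  | zero =>
      intro j
      induction j with
      | zero =>
          intro l
          have : wB q d c * monB q d c (0, 0, l) = monB q d c (0, 0, l + 1) := by
            simp [monB, ← pow_succ']
          rw [this]; exact mem_SB q d c _
      | succ j ihj =>
          intro l
          have hm : monB q d c (0, j + 1, l) = uB q d c * monB q d c (0, j, l) := by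
            simp only [monB, pow_zero, one_mul]
            rw [pow_succ', mul_assoc]
          rw [hm, ← mul_assoc, rel_wu, add_mul, smul_mul_assoc, mul_assoc]
          apply add_mem
          · exact Submodule.smul_mem _ _ (u_stable q d c _ (ihj l))
          · rw [Finset.sum_mul]
            apply Submodule.sum_mem
            intro a _
            rw [smul_mul_assoc]
            apply Submodule.smul_mem
            have : vB q d c ^ a * monB q d c (0, j, l) = monB q d c (a, j, l) := by
              simp [monB, ← mul_assoc]
            rw [this]; exact mem_SB q d c _
  | succ i ihi =>
      intro j l
      have hm : monB q d c (i + 1, j, l) = vB q d c * monB q d c (i, j, l) := by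
        rw [v_mul_mon]
      rw [hm, ← mul_assoc, rel_wv, add_mul, smul_mul_assoc, mul_assoc]
      apply add_mem
      · exact Submodule.smul_mem _ _ (v_stable q d c _ (ihi j l))
      · rw [Finset.sum_mul]
        apply Submodule.sum_mem
        intro a _
        rw [smul_mul_assoc]
        apply Submodule.smul_mem
        have : uB q d c ^ a * monB q d c (i, j, l) =
            q ^ (a * i) • monB q d c (i, a + j, l) := by
          simp only [monB, mul_assoc, pow_add]
          rw [← mul_assoc (uB q d c ^ a), upow_vpow, smul_mul_assoc, mul_assoc]
        rw [this]
        exact Submodule.smul_mem _ _ (mem_SB q d c _)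

lemma w_stable : ∀ s ∈ SB q d c, wB q d c * s ∈ SB q d c := by
  apply stable_mul
  intro ⟨i, j, l⟩
  exact w_mul_mon q d c i j l

lemma span_top : SB q d c = ⊤ := by
  rw [Submodule.eq_top_iff']
  intro y
  obtain ⟨x, rfl⟩ := RingQuot.mkAlgHom_surjective k (BqfRel k q d c) y
  have one_mem : (1 : RingQuot (BqfRel k q d c)) ∈ SB q d c := by
    have : (1 : RingQuot (BqfRel k q d c)) = monB q d c (0, 0, 0) := by simp [monB]
    rw [this]; exact mem_SB q d c _
  have key : ∀ x : FreeAlgebra k (Fin 3),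
      ∀ s ∈ SB q d c, RingQuot.mkAlgHom k (BqfRel k q d c) x * s ∈ SB q d c := by
    intro x
    induction x using FreeAlgebra.induction with
    | grade0 r =>
        intro s hs
        rw [AlgHom.commutes, ← Algebra.smul_def]
        exact Submodule.smul_mem _ _ hs
    | grade1 i =>
        fin_cases i
        · exact u_stable q d c
        · exact v_stable q d c
        · exact w_stable q d c
    | mul a b iha ihb =>
        intro s hs
        rw [map_mul, mul_assoc]
        exact iha _ (ihb _ hs)
    | add a b iha ihb =>
        intro s hs
        rw [map_add, add_mul]
        exact add_mem (iha _ hs) (ihb _ hs)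
  have := key x 1 one_mem
  rwa [mul_one] at this

end Span

/-- The family of monomials `vⁱ uʲ wˡ` (`i, j, l ∈ ℕ`) is a basis of
`B_q(f)` as a `k`-vector space. -/
theorem bqf_pbw_basis (k : Type*) [Field k] (q : k) (hq : q ≠ 0) (d : ℕ) (c : ℕ → k) :
    let u := RingQuot.mkAlgHom k (BqfRel k q d c) (ι k (0 : Fin 3))
    let v := RingQuot.mkAlgHom k (BqfRel k q d c) (ι k (1 : Fin 3))
    let w := RingQuot.mkAlgHom k (BqfRel k q d c) (ι k (2 : Fin 3))
    let mon : ℕ × ℕ × ℕ → RingQuot (BqfRel k q d c) :=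
      fun p => v ^ p.1 * u ^ p.2.1 * w ^ p.2.2
    LinearIndependent k mon ∧ Submodule.span k (Set.range mon) = ⊤ := by
  exact ⟨li_mon q d c hq, span_top q d c⟩
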